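/- For positive reals ℓa, ℓb, the function H ↦ L(ℓa, ℓb, H) = log((i·ℓb·e^H + ℓa)/(i·ℓb + ℓa·e^H)) + H·(ℓa − i·ℓb)/(ℓa + i·ℓb) has vanishing first and second complex derivatives at H = 0; i.e., L(ℓa,ℓb,H) = O(H³) as H → 0. -/

import Mathlib

open Complex

noncomputable def Lfun (ℓa ℓb : ℝ) (H : ℂ) : ℂ :=
  Complex.log ((I * ℓb * Complex.exp H + ℓa) / (I * ℓb + ℓa * Complex.exp H)) +
    H * ((ℓa - I * ℓb) / (ℓa + I * ℓb))

theorem Lfun_deriv_zero (ℓa ℓb : ℝ) (ha : 0 < ℓa) (hb : 0 < ℓb) :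
    deriv (Lfun ℓa ℓb) 0 = 0 ∧ iteratedDeriv 2 (Lfun ℓa ℓb) 0 = 0 := by
  set a : ℂ := (ℓa : ℂ) with ha_def
  set b : ℂ := (ℓb : ℂ) with hb_def
  have hab : a + I * b ≠ 0 := by
    intro h
    have := congrArg Complex.re h
    simp [ha_def, hb_def] at this
    exact ha.ne' this
  have hab' : I * b + a ≠ 0 := by rwa [add_comm] at hab
  have hcontN : Continuous (fun H : ℂ => I * b * Complex.exp H + a) := by fun_prop
  have hcontD : Continuous (fun H : ℂ => I * b + a * Complex.exp H) := by fun_prop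
  have hN0 : I * b * Complex.exp 0 + a = I * b + a := by simp
  have hD0 : I * b + a * Complex.exp 0 = I * b + a := by simp
  have hN : ∀ᶠ H in nhds (0:ℂ), I * b * Complex.exp H + a ≠ 0 :=
    hcontN.continuousAt.eventually_ne (by rw [hN0]; exact hab')
  have hD : ∀ᶠ H in nhds (0:ℂ), I * b + a * Complex.exp H ≠ 0 :=
    hcontD.continuousAt.eventually_ne (by rw [hD0]; exact hab')
  have hg : ∀ᶠ H in nhds (0:ℂ),
      (I * b * Complex.exp H + a) / (I * b + a * Complex.exp H) ∈ slitPlane := by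
    have hca : ContinuousAt (fun H : ℂ => (I * b * Complex.exp H + a) / (I * b + a * Complex.exp H)) 0 :=
      hcontN.continuousAt.div hcontD.continuousAt (by rw [hD0]; exact hab')
    apply hca.eventually_mem
    have hval : (I * b * Complex.exp 0 + a) / (I * b + a * Complex.exp 0) = 1 := by
      rw [hN0, hD0, div_self hab']
    rw [hval]
    exact isOpen_slitPlane.mem_nhds (by simp [Complex.mem_slitPlane_iff])
  set c : ℂ := (a - I * b) / (a + I * b) with hc_def
  have key : ∀ᶠ H in nhds (0:ℂ), HasDerivAt (Lfun ℓa ℓb)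
      (I * b * Complex.exp H / (I * b * Complex.exp H + a)
        - a * Complex.exp H / (I * b + a * Complex.exp H) + c) H := by
    filter_upwards [hN, hD, hg] with H hNH hDH hgH
    have hN' : HasDerivAt (fun H : ℂ => I * b * Complex.exp H + a) (I * b * Complex.exp H) H := by
      simpa using ((Complex.hasDerivAt_exp H).const_mul (I * b)).add_const a
    have hD' : HasDerivAt (fun H : ℂ => I * b + a * Complex.exp H) (a * Complex.exp H) H := by
      simpa using ((Complex.hasDerivAt_exp H).const_mul a).const_add (I * b)
    have hq := hN'.div hD' hDH
    have hlog := (Complex.hasDerivAt_log hgH).comp H hq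
    have hlin : HasDerivAt (fun H : ℂ => H * c) c H := by
      simpa using (hasDerivAt_id H).mul_const c
    have hsum := hlog.add hlin
    have hfun : Lfun ℓa ℓb = fun H : ℂ =>
        Complex.log ((I * b * Complex.exp H + a) / (I * b + a * Complex.exp H)) + H * c := by
      funext H; rfl
    rw [hfun]
    convert hsum using 1
    · rfl
    · rfl
    · rfl
    field_simp [show I * b + Complex.exp H * a ≠ 0 by rw [mul_comm (Complex.exp H)]; exact hDH]
  have hderiv0 : deriv (Lfun ℓa ℓb) 0 = 0 := by
    rw [key.self_of_nhds.deriv]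
    simp only [Complex.exp_zero, mul_one, hc_def]
    field_simp
    ring
  refine ⟨hderiv0, ?_⟩
  have hEq : deriv (Lfun ℓa ℓb) =ᶠ[nhds (0:ℂ)]
      fun H => I * b * Complex.exp H / (I * b * Complex.exp H + a)
        - a * Complex.exp H / (I * b + a * Complex.exp H) + c := by
    filter_upwards [key] with H hH using hH.deriv
  rw [show (2:ℕ) = 1 + 1 from rfl, iteratedDeriv_succ, iteratedDeriv_one, hEq.deriv_eq]
  have hN' : HasDerivAt (fun H : ℂ => I * b * Complex.exp H) (I * b * Complex.exp 0) 0 :=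
    (Complex.hasDerivAt_exp 0).const_mul (I * b)
  have hNd : HasDerivAt (fun H : ℂ => I * b * Complex.exp H + a) (I * b * Complex.exp 0) 0 := by
    simpa using hN'.add_const a
  have hD' : HasDerivAt (fun H : ℂ => a * Complex.exp H) (a * Complex.exp 0) 0 :=
    (Complex.hasDerivAt_exp 0).const_mul a
  have hDd : HasDerivAt (fun H : ℂ => I * b + a * Complex.exp H) (a * Complex.exp 0) 0 := by
    simpa using hD'.const_add (I * b)
  have h1 := hN'.div hNd (by rw [hN0]; exact hab')
  have h2 := hD'.div hDd (by rw [hD0]; exact hab')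
  have h3 := (h1.sub h2).add_const c
  rw [(show HasDerivAt (fun H : ℂ => I * b * Complex.exp H / (I * b * Complex.exp H + a)
      - a * Complex.exp H / (I * b + a * Complex.exp H) + c) _ 0 from h3).deriv]
  simp only [Complex.exp_zero, mul_one]
  field_simp
  ring
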